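/- For the ReST utility U_ReST = y^c + ln(softmax(y)^c), the GradCAM heatmap (before ReLU) satisfies E_c^ReST = E_c^pre + Σ_{k≠c} p^k (E_c^pre - E_k^pre), where E_k^pre are the pre-softmax GradCAM heatmaps and p = softmax(y). -/

import Mathlib

open Finset

/-- For the ReST utility `U_ReST = y^c + ln(softmax(y)^c)` whose
gradient w.r.t. each activation map is (by the chain rule, using
`∂ln p^c/∂y^c = 1 - p^c` and `∂ln p^c/∂y^k = -p^k` for `k ≠ c`)
`∂U_ReST/∂A^i = ∂y^c/∂A^i + (1 - p^c) ∂y^c/∂A^i - ∑_{k≠c} p^k ∂y^k/∂A^i`,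
the GradCAM heatmap before ReLU satisfies
`E_c^ReST = E_c^pre + ∑_{k≠c} p^k (E_c^pre - E_k^pre)`. -/
theorem gradcam_rest_heatmap {C N d : ℕ}
    (A : Fin N → Fin d → ℝ) (p : Fin C → ℝ) (hp : ∑ k, p k = 1)
    (dy : Fin C → Fin N → Fin d → ℝ) (c : Fin C) (dU : Fin N → Fin d → ℝ)
    (hchain : ∀ i, dU i = dy c i + ((1 - p c) • dy c i
        - ∑ k ∈ Finset.univ.erase c, p k • dy k i))
    (g : (Fin d → ℝ) →ₗ[ℝ] (Fin d → ℝ))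
    (Epre : Fin C → Fin d → ℝ) (EReST : Fin d → ℝ)
    (hEpre : ∀ k, Epre k = (1 / (N : ℝ)) • ∑ i, g (dy k i) * A i)
    (hEReST : EReST = (1 / (N : ℝ)) • ∑ i, g (dU i) * A i) :
    EReST = Epre c + ∑ k ∈ Finset.univ.erase c, p k • (Epre c - Epre k) := by
  have hpc : ∑ k ∈ Finset.univ.erase c, p k = 1 - p c := by
    have := Finset.add_sum_erase Finset.univ p (Finset.mem_univ c)
    linarith [hp ▸ this]
  funext x
  simp only [hEReST, hchain, hEpre, map_add, map_sub, map_smul, Pi.add_apply,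
    Pi.sub_apply, Pi.smul_apply, Pi.mul_apply, smul_eq_mul, Finset.sum_apply,
    map_sum, add_mul, sub_mul, Finset.sum_add_distrib, Finset.sum_sub_distrib,
    Finset.mul_sum, Finset.sum_mul]
  rw [Finset.sum_comm]
  simp only [one_mul, mul_assoc, ← Finset.mul_sum, mul_sub, Finset.sum_sub_distrib,
    ← Finset.sum_mul, hpc]
  have h2 : ((N : ℝ))⁻¹ * ∑ k ∈ Finset.univ.erase c, p k * ∑ i, g (dy k i) x * A i x
      = ∑ k ∈ Finset.univ.erase c, p k * ((N : ℝ))⁻¹ * ∑ i, g (dy k i) x * A i x := by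
    rw [Finset.mul_sum]
    exact Finset.sum_congr rfl fun k _ => by ring
  ring_nf
  rw [h2]
  congr 1
  exact Finset.sum_congr rfl fun k _ => by ring
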